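/- Let h be a multisegment, a an integer, and Δ₁, …, Δₖ segments all with left endpoint a, forming a multiset m admissible to h. Then the multiset {Υ(Δ₁, h), Υ(Δ₂, r(Δ₁,h)), Υ(Δ₃, r({Δ₁,Δ₂},h)), …, Υ(Δₖ, r({Δ₁,…,Δ_{k−1}},h))} does not depend on the chosen enumeration Δ₁, …, Δₖ of m. (Hence the multiset fs(m,h) of first segments is well-defined.) -/
import Mathlib


noncomputable section
open Classical

/-- A segment `[a,b]`: a pair of integers with `a ≤ b`, identified with the
integer interval `{a, a+1, …, b}`. -/
def Seg : Type := {p : ℤ × ℤ // p.1 ≤ p.2}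

/-- Constructor for segments. -/
def Seg.mk (a b : ℤ) (hab : a ≤ b) : Seg := Subtype.mk (a, b) hab

instance : DecidableEq Seg := inferInstanceAs (DecidableEq {p : ℤ × ℤ // p.1 ≤ p.2})

instance : Inhabited Seg := ⟨Seg.mk 0 0 le_rfl⟩

/-- The lexicographic ordering `≼ᴸ` on segments: `[a,b] ≤ [a',b']` iff `a < a'`,
or `a = a'` and `b ≤ b'`. -/
instance : LinearOrder Seg :=
  LinearOrder.lift' (fun Δ => toLex (Subtype.val Δ))
    (fun _ _ hh => Subtype.ext (toLex.injective hh))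

/-- `a(Δ)`, the left endpoint. -/
def segA (Δ : Seg) : ℤ := (Subtype.val Δ).1

/-- `b(Δ)`, the right endpoint. -/
def segB (Δ : Seg) : ℤ := (Subtype.val Δ).2

/-- `[a,b]` as a multiset of segments: a singleton if `a ≤ b`, empty otherwise
("empty segments are discarded"). -/
def mkSeg? (a b : ℤ) : Multiset Seg := if h : a ≤ b then {Seg.mk a b h} else 0

/-- `⁻Δ = [a+1,b]`, as a multiset (the empty segment being discarded). -/
def negSeg (Δ : Seg) : Multiset Seg := mkSeg? (segA Δ + 1) (segB Δ)

/-- `⁻m` for a multisegment `m`. -/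
def negM (m : Multiset Seg) : Multiset Seg := m.bind negSeg

/-- `m[c]`: the submultiset of segments of `m` starting at `c`. -/
def atc (m : Multiset Seg) (c : ℤ) : Multiset Seg := m.filter (fun Δ => segA Δ = c)

/-- `Δ ⊆ Δ'` as intervals. -/
def Subseg (Δ Δ' : Seg) : Prop := segA Δ' ≤ segA Δ ∧ segB Δ ≤ segB Δ'

/-- Two segments are linked: their union is an interval and neither contains
the other. -/
def Linked (Δ Δ' : Seg) : Prop :=
  segA Δ ≤ segB Δ' + 1 ∧ segA Δ' ≤ segB Δ + 1 ∧ ¬ Subseg Δ Δ' ∧ ¬ Subseg Δ' Δ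

/-- `Δ = [a,b]` is admissible to `h`: `h` contains a segment `[a,c]` with `c ≥ b`. -/
def SegAdmissible (Δ : Seg) (h : Multiset Seg) : Prop :=
  ∃ D ∈ h, segA D = segA Δ ∧ segB Δ ≤ segB D

/-- The tail of the removal sequence: recursively pick the `≺ᴸ`-minimal segment
`[aᵢ,bᵢ]` of `h` with `a_{i-1} < aᵢ` and `b ≤ bᵢ < b_{i-1}`. -/
def removalTail (h : Multiset Seg) (b : ℤ) : ℕ → ℤ → ℤ → List Seg
  | 0, _, _ => []
  | fuel + 1, aprev, bprev =>
    if hx : ∃ D, (D ∈ h ∧ aprev < segA D ∧ b ≤ segB D ∧ segB D < bprev) ∧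
        ∀ D', (D' ∈ h ∧ aprev < segA D' ∧ b ≤ segB D' ∧ segB D' < bprev) → D ≤ D' then
      Classical.choose hx ::
        removalTail h b fuel (segA (Classical.choose hx)) (segB (Classical.choose hx))
    else []

/-- The removal sequence for `(Δ, h)`: `Δ₁` is a shortest segment `[a,c]` of `h`
with `c ≥ b`, followed by the recursively chosen segments. (Empty if `Δ` is not
admissible to `h`.) -/
def removalSeq (Δ : Seg) (h : Multiset Seg) : List Seg :=
  if hx : ∃ D, (D ∈ h ∧ segA D = segA Δ ∧ segB Δ ≤ segB D) ∧
      ∀ D', (D' ∈ h ∧ segA D' = segA Δ ∧ segB Δ ≤ segB D') → segB D ≤ segB D' then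
    Classical.choose hx ::
      removalTail h (segB Δ) (segB (Classical.choose hx) - segB Δ).toNat
        (segA (Classical.choose hx)) (segB (Classical.choose hx))
  else []

/-- `Υ(Δ,h)`: the first segment of the removal sequence for `(Δ,h)`. -/
def Upsilon (Δ : Seg) (h : Multiset Seg) : Seg := (removalSeq Δ h).headD default

/-- The truncations `Δ₁ᵗʳ, …, Δᵣᵗʳ` of a removal sequence:
`Δᵢᵗʳ = [a_{i+1}, bᵢ]` for `i < r` and `Δᵣᵗʳ = [b+1, bᵣ]` (possibly empty). -/
def truncList (b : ℤ) : List Seg → Multiset Seg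
  | [] => 0
  | [D] => mkSeg? (b + 1) (segB D)
  | D :: D' :: rest => mkSeg? (segA D') (segB D) + truncList b (D' :: rest)

/-- `r(Δ,h) = h − Δ₁ − … − Δᵣ + Δ₁ᵗʳ + … + Δᵣᵗʳ`, with `none` playing the role
of the infinity multisegment `∞`. -/
def segRemove (Δ : Seg) (h : Multiset Seg) : Option (Multiset Seg) :=
  if SegAdmissible Δ h then
    some (h - (removalSeq Δ h : Multiset Seg) + truncList (segB Δ) (removalSeq Δ h))
  else none

/-- Iterated removal along a list of segments (also `r(Δ,∞) = ∞`). -/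
def rList : List Seg → Option (Multiset Seg) → Option (Multiset Seg)
  | [], o => o
  | Δ :: rest, o => rList rest (o.bind (fun x => segRemove Δ x))

/-- `r(m,h)` for a multisegment `m`: apply the removals along the segments of
`m` listed in an ascending (here: `≺ᴸ`-sorted) order. -/
def rM (m h : Multiset Seg) : Option (Multiset Seg) :=
  rList (m.sort (· ≤ ·)) (some h)

/-- The smallest integer `a` with `n[a] ≠ ∅` (junk value `0` for `n = ∅`). -/
def minStart (n : Multiset Seg) : ℤ := ((n.map segA).sort (· ≤ ·)).headD 0

/-- `Υ(Δ₁,r₀), Υ(Δ₂,r₁), …` computed sequentially along a list of segments. -/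
def fsList : List Seg → Multiset Seg → Multiset Seg
  | [], _ => 0
  | Δ :: rest, h =>
    Upsilon Δ h ::ₘ
      (match segRemove Δ h with
        | some h' => fsList rest h'
        | none => 0)

/-- `fs(n,h)`: with `a` the smallest integer such that `n[a] ≠ ∅` and
`n[a] = {Δ₁, …, Δₖ}`, this is `{Υ(Δ₁,r₀), …, Υ(Δₖ,r_{k-1})}` if `n[a]` is
admissible to `h`, and `∅` otherwise (also `fs(∅,h) = ∅`). -/
def fs (n h : Multiset Seg) : Multiset Seg :=
  if n = 0 then 0
  else if rM (atc n (minStart n)) h ≠ none then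
    fsList ((atc n (minStart n)).sort (· ≤ ·)) h
  else 0

/-- `trr(n,h) = h − fs(n,h) + ⁻(fs(n,h))`. -/
def trr (n h : Multiset Seg) : Multiset Seg := h - fs n h + negM (fs n h)

/-- `trd(n,h) = n − n[a] + ⁻(n[a])` where `a` is the smallest integer with
`n[a] ≠ ∅` (and `trd(∅,h) = ∅`). -/
def trd (n h : Multiset Seg) : Multiset Seg :=
  if n = 0 then 0 else n - atc n (minStart n) + negM (atc n (minStart n))

/-- The pairs `(nᵢ, hᵢ)` of the fine chain: `n₀ = n`, `h₀ = h`,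
`nᵢ = trd(n_{i-1}, h_{i-1})`, `hᵢ = trr(n_{i-1}, h_{i-1})`. -/
def fcPair (n h : Multiset Seg) : ℕ → Multiset Seg × Multiset Seg
  | 0 => (n, h)
  | i + 1 => (trd (fcPair n h i).1 (fcPair n h i).2, trr (fcPair n h i).1 (fcPair n h i).2)

/-- The fine chain `fc_h(n)`: the sequence `fs(n₀,h₀), fs(n₁,h₁), …`. -/
def fc (h n : Multiset Seg) (i : ℕ) : Multiset Seg := fs (fcPair n h i).1 (fcPair n h i).2

/-- `n` is obtained from `m` by an elementary intersection-union operation: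
`n = m − Δ − Δ' + (Δ ∪ Δ') + (Δ ∩ Δ')` for a pair of linked segments `Δ, Δ'`
of `m` (intersection omitted if empty). -/
def elemIU (m n : Multiset Seg) : Prop :=
  ∃ Δ Δ', Δ ∈ m ∧ Δ' ∈ m.erase Δ ∧ Linked Δ Δ' ∧
    n = (m.erase Δ).erase Δ'
        + mkSeg? (min (segA Δ) (segA Δ')) (max (segB Δ) (segB Δ'))
        + mkSeg? (max (segA Δ) (segA Δ')) (min (segB Δ) (segB Δ'))

/-- The Zelevinsky ordering: `n ≤_Z m` iff `n = m` or `n` is obtained from `m`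
by a finite sequence of elementary intersection-union operations. -/
def leZ (n m : Multiset Seg) : Prop := Relation.ReflTransGen elemIU m n

/-- The cuspidal support of a multisegment: the multiset union of its segments,
as a multiset of integers. -/
def csupp (m : Multiset Seg) : Multiset ℤ :=
  m.bind (fun Δ => (Finset.Icc (segA Δ) (segB Δ)).val)

/-- The `b`-values of a multisegment, sorted in descending order. -/
def bDesc (m : Multiset Seg) : List ℤ := ((m.map segB).sort (· ≤ ·)).reverse

/-- `m₁ ≤ᵃ_c m₂` for multisegments at a point `c`: with segments labelled
`Δ_{1,k} ≤ᵃ_c … ≤ᵃ_c Δ_{1,1}` and `Δ_{2,r} ≤ᵃ_c … ≤ᵃ_c Δ_{2,1}`, require `k ≤ r`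
and `Δ_{1,i} ≤ᵃ_c Δ_{2,i}` for all `i ≤ k`. -/
def leA (m₁ m₂ : Multiset Seg) : Prop :=
  (bDesc m₁).length ≤ (bDesc m₂).length ∧
    ∀ i < (bDesc m₁).length, (bDesc m₁).getD i 0 ≤ (bDesc m₂).getD i 0

/-- `m₁ <ᵃ_c m₂`. -/
def ltA (m₁ m₂ : Multiset Seg) : Prop := leA m₁ m₂ ∧ m₁ ≠ m₂

/-- The fine chain ordering `n <^{fc} n'` (with respect to `h`). -/
def ltFC (h n n' : Multiset Seg) : Prop :=
  ∃ i, (∀ j < i, fc h n j = fc h n' j) ∧ ltA (fc h n i) (fc h n' i)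

/-- `n ≤^{fc} n'`: either `n <^{fc} n'` or the two fine chains are equal. -/
def leFC (h n n' : Multiset Seg) : Prop := ltFC h n n' ∨ ∀ i, fc h n i = fc h n' i

/-- Local minimizability of `(n,h)`: with `a` the smallest integer such that
`n[a] ≠ ∅`, there is a segment `Δ̄` in `n[a+1]` with
`|{Δ ∈ n[a] : Δ̄ ⊆ Δ}| < |{Δ ∈ fs(n,h) : Δ̄ ⊆ Δ}|`. -/
def locallyMin (n h : Multiset Seg) : Prop :=
  ∃ Δb ∈ atc n (minStart n + 1),
    ((atc n (minStart n)).filter (fun Δ => Subseg Δb Δ)).card <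
      ((fs n h).filter (fun Δ => Subseg Δb Δ)).card

/-- The shortest segment of the removal sequence for `(Δ,h)` whose interval
contains `x` (by the nesting property, the last such one in the sequence). -/
def shortestCont (Δ : Seg) (h : Multiset Seg) (x : ℤ) : Seg :=
  (((removalSeq Δ h).filter (fun D => decide (segA D ≤ x ∧ x ≤ segB D))).getLast?).getD default

/-- The non-overlapping property for `(Δ, Δ', h)`: for the shortest segment `Δ̄`
in the removal sequence for `(Δ,h)` containing `a(Δ') − 1`, one has `Δ' ⊄ Δ̄`. -/
def NonOverlap (Δ Δ' : Seg) (h : Multiset Seg) : Prop :=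
  ¬ Subseg Δ' (shortestCont Δ h (segA Δ' - 1))

/-- `ε_Δ(h) = |{Δ̃ ∈ h[a(Δ)] : Δ ⊆ Δ̃}|`, counted with multiplicity. -/
def epsilonSeg (Δ : Seg) (h : Multiset Seg) : ℕ :=
  ((atc h (segA Δ)).filter (fun D => Subseg Δ D)).card

/-- `η_{Δ'}(h) = η_{Δ'}(h')`: componentwise equality of
`(ε_{[a',b']}, ε_{[a'+1,b']}, …, ε_{[b',b']})`. -/
def etaEq (Δ' : Seg) (h h' : Multiset Seg) : Prop :=
  ∀ c, segA Δ' ≤ c → ∀ hc : c ≤ segB Δ',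
    epsilonSeg (Seg.mk c (segB Δ') hc) h = epsilonSeg (Seg.mk c (segB Δ') hc) h'

/-- The intermediate segment property for `(Δ, Δ', h)`. -/
def IntermediateSeg (Δ Δ' : Seg) (h : Multiset Seg) : Prop :=
  ∃ D ∈ h, segA Δ ≤ segA D ∧ segA D < segA Δ' ∧ segB Δ ≤ segB D ∧ segB D < segB Δ'

/-- Helper to build segments from literals. -/
def sg (a b : ℤ) (hab : a ≤ b := by decide) : Seg := Seg.mk a b hab
section Statement1Aux

lemma seg_ext' {D E : Seg} (h1 : segA D = segA E) (h2 : segB D = segB E) : D = E :=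
  Subtype.ext (Prod.ext h1 h2)

lemma seg_le' (D : Seg) : segA D ≤ segB D := D.2

/-- Spec for the first pick of a removal sequence, relative to `S = h[a]`. -/
def isPick (b : ℤ) (S : Multiset Seg) (D : Seg) : Prop :=
  D ∈ S ∧ b ≤ segB D ∧ ∀ D' ∈ S, b ≤ segB D' → segB D ≤ segB D'

lemma isPick_unique {a b : ℤ} {S : Multiset Seg} (hS : ∀ D ∈ S, segA D = a)
    {D E : Seg} (hD : isPick b S D) (hE : isPick b S E) : D = E :=
  seg_ext' ((hS D hD.1).trans (hS E hE.1).symm)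
    (le_antisymm (hD.2.2 E hE.1 hE.2.1) (hE.2.2 D hD.1 hD.2.1))

lemma mem_atc' {h : Multiset Seg} {c : ℤ} {D : Seg} : D ∈ atc h c ↔ D ∈ h ∧ segA D = c := by
  simp [atc]

lemma mem_mkSeg? {x y : ℤ} {E : Seg} (hE : E ∈ mkSeg? x y) : segA E = x := by
  unfold mkSeg? at hE
  split at hE
  · rw [Multiset.mem_singleton] at hE; subst hE; rfl
  · simp at hE

lemma removalTail_gt (h : Multiset Seg) (b : ℤ) :
    ∀ (fuel : ℕ) (ap bp : ℤ), ∀ D ∈ removalTail h b fuel ap bp, ap < segA D := by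
  intro fuel
  induction fuel with
  | zero => intro ap bp D hD; simp [removalTail] at hD
  | succ n ih =>
    intro ap bp D hD
    rw [removalTail] at hD
    split at hD
    · rename_i hx
      rcases List.mem_cons.mp hD with rfl | hD
      · exact (Classical.choose_spec hx).1.2.1
      · exact lt_trans (Classical.choose_spec hx).1.2.1 (ih _ _ D hD)
    · simp at hD

lemma exists_hx {Δ : Seg} {h : Multiset Seg} (hadm : SegAdmissible Δ h) :
    ∃ D, (D ∈ h ∧ segA D = segA Δ ∧ segB Δ ≤ segB D) ∧
      ∀ D', (D' ∈ h ∧ segA D' = segA Δ ∧ segB Δ ≤ segB D') → segB D ≤ segB D' := by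
  classical
  obtain ⟨D₀, hD₀, h1, h2⟩ := hadm
  have hne : (h.toFinset.filter (fun D => segA D = segA Δ ∧ segB Δ ≤ segB D)).Nonempty :=
    ⟨D₀, by simp only [Finset.mem_filter, Multiset.mem_toFinset]; exact ⟨hD₀, h1, h2⟩⟩
  obtain ⟨D, hDmem, hmin⟩ := Finset.exists_min_image _ segB hne
  simp only [Finset.mem_filter, Multiset.mem_toFinset] at hDmem
  refine ⟨D, ⟨hDmem.1, hDmem.2⟩, ?_⟩
  intro D' hD'
  exact hmin D' (Finset.mem_filter.mpr ⟨Multiset.mem_toFinset.mpr hD'.1, hD'.2.1, hD'.2.2⟩)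

lemma removalSeq_spec {Δ : Seg} {h : Multiset Seg} (hadm : SegAdmissible Δ h) :
    ∃ tail, removalSeq Δ h = Upsilon Δ h :: tail ∧
      isPick (segB Δ) (atc h (segA Δ)) (Upsilon Δ h) ∧
      ∀ D ∈ tail, segA Δ < segA D := by
  have hx := exists_hx hadm
  have hseq : removalSeq Δ h = Classical.choose hx ::
      removalTail h (segB Δ) (segB (Classical.choose hx) - segB Δ).toNat
        (segA (Classical.choose hx)) (segB (Classical.choose hx)) := by
    rw [removalSeq, dif_pos hx]
  have hU : Upsilon Δ h = Classical.choose hx := by rw [Upsilon, hseq]; rfl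
  obtain ⟨⟨hmem, hA, hB⟩, hmin⟩ := Classical.choose_spec hx
  refine ⟨removalTail h (segB Δ) (segB (Classical.choose hx) - segB Δ).toNat
      (segA (Classical.choose hx)) (segB (Classical.choose hx)), by rw [hU, hseq], ?_, ?_⟩
  · rw [hU]
    refine ⟨mem_atc'.mpr ⟨hmem, hA⟩, hB, ?_⟩
    intro D' hD' hbD'
    exact hmin D' ⟨(mem_atc'.mp hD').1, (mem_atc'.mp hD').2, hbD'⟩
  · intro D hD
    have h2 := removalTail_gt h (segB Δ) _ _ _ D hD
    rwa [hA] at h2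

lemma removalSeq_nil {Δ : Seg} {h : Multiset Seg} (hadm : ¬ SegAdmissible Δ h) :
    removalSeq Δ h = [] := by
  have hnx : ¬ ∃ D, (D ∈ h ∧ segA D = segA Δ ∧ segB Δ ≤ segB D) ∧
      ∀ D', (D' ∈ h ∧ segA D' = segA Δ ∧ segB Δ ≤ segB D') → segB D ≤ segB D' := by
    rintro ⟨D, ⟨hmem, hA, hB⟩, -⟩
    exact hadm ⟨D, hmem, hA, hB⟩
  rw [removalSeq, dif_neg hnx]

lemma truncList_segA : ∀ (l : List Seg) (b : ℤ) (E : Seg), E ∈ truncList b l →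
    (∃ D ∈ l.tail, segA E = segA D) ∨ segA E = b + 1 := by
  intro l
  induction l with
  | nil => intro b E hE; simp [truncList] at hE
  | cons D l ih =>
    intro b E hE
    cases l with
    | nil =>
      rw [truncList] at hE
      exact Or.inr (mem_mkSeg? hE)
    | cons D' rest =>
      rw [truncList] at hE
      rcases Multiset.mem_add.mp hE with hE | hE
      · exact Or.inl ⟨D', by simp, mem_mkSeg? hE⟩
      · rcases ih b E hE with ⟨D₂, hD₂, hEq⟩ | hb
        · exact Or.inl ⟨D₂, List.mem_cons_of_mem _ hD₂, hEq⟩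
        · exact Or.inr hb

lemma segRemove_eq {Δ : Seg} {h : Multiset Seg} (hadm : SegAdmissible Δ h) :
    ∃ h', segRemove Δ h = some h' ∧
      atc h' (segA Δ) = (atc h (segA Δ)).erase (Upsilon Δ h) := by
  refine ⟨h - ↑(removalSeq Δ h) + truncList (segB Δ) (removalSeq Δ h), ?_, ?_⟩
  · simp only [segRemove, if_pos hadm]
  · obtain ⟨tail, hseq, hpick, htail⟩ := removalSeq_spec hadm
    have hUA : segA (Upsilon Δ h) = segA Δ := (mem_atc'.mp hpick.1).2
    unfold atc
    rw [Multiset.filter_add, Multiset.filter_sub]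
    have h1 : Multiset.filter (fun D => segA D = segA Δ) (↑(removalSeq Δ h) : Multiset Seg)
        = {Upsilon Δ h} := by
      have hz : Multiset.filter (fun D => segA D = segA Δ) (↑tail : Multiset Seg) = 0 := by
        rw [Multiset.filter_eq_nil]
        intro D hD
        have := htail D (by exact_mod_cast hD)
        omega
      rw [hseq, ← Multiset.cons_coe,
        Multiset.filter_cons_of_pos (p := fun D => segA D = segA Δ) _ hUA, hz,
        Multiset.cons_zero]
    have h2 : Multiset.filter (fun D => segA D = segA Δ)
        (truncList (segB Δ) (removalSeq Δ h)) = 0 := by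
      rw [Multiset.filter_eq_nil]
      intro E hE
      rcases truncList_segA _ _ _ hE with ⟨D, hD, hEq⟩ | hEq
      · rw [hseq] at hD
        have := htail D hD
        omega
      · have := seg_le' Δ
        omega
    rw [h1, h2, Multiset.sub_singleton, add_zero]

lemma segRemove_none {Δ : Seg} {h : Multiset Seg} (hadm : ¬ SegAdmissible Δ h) :
    segRemove Δ h = none := by
  simp only [segRemove, if_neg hadm]

lemma segAdmissible_iff' {Δ : Seg} {h : Multiset Seg} :
    SegAdmissible Δ h ↔ ∃ D ∈ atc h (segA Δ), segB Δ ≤ segB D := by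
  constructor
  · rintro ⟨D, hD, hA, hB⟩; exact ⟨D, mem_atc'.mpr ⟨hD, hA⟩, hB⟩
  · rintro ⟨D, hD, hB⟩; exact ⟨D, (mem_atc'.mp hD).1, (mem_atc'.mp hD).2, hB⟩

lemma rList_none : ∀ l : List Seg, rList l none = none
  | [] => rfl
  | Δ :: rest => by rw [rList]; exact rList_none rest

lemma rList_cons (Δ : Seg) (rest : List Seg) (h : Multiset Seg) :
    rList (Δ :: rest) (some h) = rList rest (segRemove Δ h) := rfl

lemma upsilon_eq_of_isPick {Δ : Seg} {h : Multiset Seg} {D : Seg}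
    (hp : isPick (segB Δ) (atc h (segA Δ)) D) : SegAdmissible Δ h ∧ Upsilon Δ h = D := by
  have hadm : SegAdmissible Δ h := segAdmissible_iff'.mpr ⟨D, hp.1, hp.2.1⟩
  obtain ⟨tail, -, hpick, -⟩ := removalSeq_spec hadm
  exact ⟨hadm, isPick_unique (a := segA Δ) (fun E hE => (mem_atc'.mp hE).2) hpick hp⟩

lemma congr_main (a : ℤ) : ∀ (l : List Seg) (h h' : Multiset Seg),
    (∀ Δ ∈ l, segA Δ = a) → atc h a = atc h' a →
    fsList l h = fsList l h' ∧ (rList l (some h) = none ↔ rList l (some h') = none) := by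
  intro l
  induction l with
  | nil =>
    intro h h' _ _
    refine ⟨rfl, ?_⟩
    constructor <;> intro hx <;> simp [rList] at hx
  | cons Δ rest ih =>
    intro h h' hl hc
    have haΔ : segA Δ = a := hl Δ (by simp)
    have hiff : SegAdmissible Δ h ↔ SegAdmissible Δ h' := by
      rw [segAdmissible_iff', segAdmissible_iff', haΔ, hc]
    by_cases hadm : SegAdmissible Δ h
    · have hadm' : SegAdmissible Δ h' := hiff.mp hadm
      obtain ⟨h₁, hr₁, hatc₁⟩ := segRemove_eq hadm
      obtain ⟨h₁', hr₁', hatc₁'⟩ := segRemove_eq hadm'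
      have hU : Upsilon Δ h = Upsilon Δ h' := by
        obtain ⟨-, -, hp, -⟩ := removalSeq_spec hadm
        obtain ⟨-, -, hp', -⟩ := removalSeq_spec hadm'
        rw [haΔ, hc, ← haΔ] at hp
        exact isPick_unique (a := segA Δ) (fun E hE => (mem_atc'.mp hE).2) hp hp'
      have hc₁ : atc h₁ a = atc h₁' a := by
        rw [haΔ] at hatc₁ hatc₁'
        rw [hatc₁, hatc₁', hc, hU]
      obtain ⟨hfs, hrl⟩ := ih h₁ h₁' (fun D hD => hl D (List.mem_cons_of_mem _ hD)) hc₁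
      constructor
      · simp only [fsList, hr₁, hr₁', hU, hfs]
      · rw [rList_cons, rList_cons, hr₁, hr₁']
        exact hrl
    · have hadm' : ¬ SegAdmissible Δ h' := fun hx => hadm (hiff.mpr hx)
      have hU : Upsilon Δ h = Upsilon Δ h' := by
        rw [Upsilon, Upsilon, removalSeq_nil hadm, removalSeq_nil hadm']
      constructor
      · simp only [fsList, segRemove_none hadm, segRemove_none hadm', hU]
      · rw [rList_cons, rList_cons, segRemove_none hadm, segRemove_none hadm']

lemma pick_swap (a : ℤ) (S : Multiset Seg) (hS : ∀ D ∈ S, segA D = a) (b b' : ℤ) (c c' : Seg)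
    (hc : isPick b S c) (hc' : isPick b' (S.erase c) c') :
    ∃ d e, isPick b' S d ∧ isPick b (S.erase d) e ∧
      (d ::ₘ {e} : Multiset Seg) = c ::ₘ {c'} ∧ (S.erase d).erase e = (S.erase c).erase c' := by
  obtain ⟨hcS, hbc, hcmin⟩ := hc
  obtain ⟨hc'S, hbc', hc'min⟩ := hc'
  have hc'S' : c' ∈ S := Multiset.mem_of_mem_erase hc'S
  by_cases hord : segB c ≤ segB c' ∧ b' ≤ segB c
  · obtain ⟨ho1, ho2⟩ := hord
    refine ⟨c, c', ⟨hcS, ho2, ?_⟩, ⟨hc'S, by omega, ?_⟩, rfl, rfl⟩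
    · intro D hD hbD
      by_contra hlt
      push_neg at hlt
      have hDne : D ≠ c := by
        intro hEq; rw [hEq] at hlt; omega
      have hDe : D ∈ S.erase c := (Multiset.mem_erase_of_ne hDne).mpr hD
      have := hc'min D hDe hbD
      omega
    · intro D hD hbD
      have hDS : D ∈ S := Multiset.mem_of_mem_erase hD
      have h1 : segB c ≤ segB D := hcmin D hDS hbD
      exact hc'min D hD (by omega)
  · push_neg at hord
    have key : segB c' < segB c ∨ segB c < b' := by
      by_cases h1 : segB c ≤ segB c'
      · right; exact hord h1
      · left; omega
    have hne : segB c' ≠ segB c := by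
      rcases key with h1 | h1
      · omega
      · omega
    have hd : isPick b' S c' := by
      refine ⟨hc'S', hbc', ?_⟩
      intro D hD hbD
      rcases key with hk | hk
      · by_cases hDc : D = c
        · rw [hDc]; omega
        · exact hc'min D ((Multiset.mem_erase_of_ne hDc).mpr hD) hbD
      · have hDc : D ≠ c := by
          intro hEq; rw [hEq] at hbD; omega
        exact hc'min D ((Multiset.mem_erase_of_ne hDc).mpr hD) hbD
    have hcc' : c ≠ c' := fun hEq => hne (by rw [hEq])
    have he : isPick b (S.erase c') c := by
      refine ⟨(Multiset.mem_erase_of_ne hcc').mpr hcS, hbc, ?_⟩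
      intro D hD hbD
      exact hcmin D (Multiset.mem_of_mem_erase hD) hbD
    refine ⟨c', c, hd, he, ?_, Multiset.erase_comm S c' c⟩
    exact Multiset.cons_swap c' c 0

lemma cons_cons_eq {u v x y : Seg} (M : Multiset Seg)
    (h : (u ::ₘ {v} : Multiset Seg) = x ::ₘ {y}) : u ::ₘ v ::ₘ M = x ::ₘ y ::ₘ M := by
  have h1 : ∀ (p q : Seg), p ::ₘ q ::ₘ M = (p ::ₘ {q}) + M := by
    intro p q
    rw [← Multiset.singleton_add, ← Multiset.singleton_add, ← Multiset.singleton_add,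
      add_assoc]
  rw [h1, h1, h]

lemma swap_main (a : ℤ) (x y : Seg) (rest : List Seg) (h : Multiset Seg)
    (hax : segA x = a) (hay : segA y = a) (hrest : ∀ Δ ∈ rest, segA Δ = a)
    (hs : rList (y :: x :: rest) (some h) ≠ none) :
    fsList (y :: x :: rest) h = fsList (x :: y :: rest) h ∧
      rList (x :: y :: rest) (some h) ≠ none := by
  have hadmy : SegAdmissible y h := by
    by_contra hn
    exact hs (by rw [rList_cons, segRemove_none hn]; exact rList_none _)
  obtain ⟨h₁, hr₁, hatc₁⟩ := segRemove_eq hadmy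
  have hs₁ : rList (x :: rest) (some h₁) ≠ none := by rwa [rList_cons, hr₁] at hs
  have hadmx : SegAdmissible x h₁ := by
    by_contra hn
    exact hs₁ (by rw [rList_cons, segRemove_none hn]; exact rList_none _)
  obtain ⟨h₂, hr₂, hatc₂⟩ := segRemove_eq hadmx
  have hs₂ : rList rest (some h₂) ≠ none := by rwa [rList_cons, hr₂] at hs₁
  obtain ⟨t1, -, hpc, -⟩ := removalSeq_spec hadmy
  obtain ⟨t2, -, hpc', -⟩ := removalSeq_spec hadmx
  rw [hay] at hpc hatc₁
  rw [hax] at hpc' hatc₂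
  rw [hatc₁] at hpc' hatc₂
  obtain ⟨d, e, hd, he, hde, herase⟩ := pick_swap a (atc h a)
    (fun D hD => (mem_atc'.mp hD).2) (segB y) (segB x) (Upsilon y h) (Upsilon x h₁) hpc hpc'
  obtain ⟨hadmx', hUx⟩ := upsilon_eq_of_isPick (Δ := x) (h := h) (by rw [hax]; exact hd)
  obtain ⟨h₁', hr₁', hatc₁'⟩ := segRemove_eq hadmx'
  rw [hax, hUx] at hatc₁'
  obtain ⟨hadmy', hUy⟩ := upsilon_eq_of_isPick (Δ := y) (h := h₁')
    (by rw [hay, hatc₁']; exact he)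
  obtain ⟨h₂', hr₂', hatc₂'⟩ := segRemove_eq hadmy'
  rw [hay, hatc₁', hUy] at hatc₂'
  have hcc : atc h₂ a = atc h₂' a := by rw [hatc₂, hatc₂', herase]
  obtain ⟨hfs, hio⟩ := congr_main a rest h₂ h₂' hrest hcc
  constructor
  · simp only [fsList, hr₁, hr₂, hr₁', hr₂']
    rw [hUx, hUy, hfs]
    exact cons_cons_eq _ hde.symm
  · rw [rList_cons, hr₁', rList_cons, hr₂']
    intro hn
    exact hs₂ (hio.mpr hn)

lemma perm_main {l l' : List Seg} (hp : l.Perm l') (a : ℤ) :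
    ∀ h : Multiset Seg, (∀ Δ ∈ l, segA Δ = a) → rList l (some h) ≠ none →
      fsList l h = fsList l' h ∧ rList l' (some h) ≠ none := by
  induction hp with
  | nil => intro h _ hne; exact ⟨rfl, hne⟩
  | cons Δ hp ih =>
    intro h hl hne
    have hadm : SegAdmissible Δ h := by
      by_contra hn
      exact hne (by rw [rList_cons, segRemove_none hn]; exact rList_none _)
    obtain ⟨h₁, hr₁, -⟩ := segRemove_eq hadm
    have hne₁ := by rw [rList_cons, hr₁] at hne; exact hne
    obtain ⟨hfs, hne'⟩ := ih h₁ (fun D hD => hl D (List.mem_cons_of_mem _ hD)) hne₁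
    constructor
    · simp only [fsList, hr₁, hfs]
    · rw [rList_cons, hr₁]; exact hne'
  | swap u v L =>
    intro h hl hne
    exact swap_main a u v L h (hl u (by simp)) (hl v (by simp))
      (fun D hD => hl D (by simp [hD])) hne
  | trans hp₁ hp₂ ih₁ ih₂ =>
    intro h hl hne
    obtain ⟨hfs₁, hne₂⟩ := ih₁ h hl hne
    obtain ⟨hfs₂, hne₃⟩ := ih₂ h (fun D hD => hl D (hp₁.mem_iff.mpr hD)) hne₂
    exact ⟨hfs₁.trans hfs₂, hne₃⟩

end Statement1Aux

/-- Lemma: `fs(m,h)` is well-defined: for segments all starting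
at the same point `a`, the multiset of first segments produced sequentially is
independent of the chosen enumeration. -/
theorem statement1 (h : Multiset Seg) (a : ℤ) (l l' : List Seg)
    (hperm : l.Perm l')
    (hstart : ∀ Δ ∈ l, segA Δ = a)
    (hadm : rM (l : Multiset Seg) h ≠ none) :
    fsList l h = fsList l' h := by
  classical
  have hsort : ((l : Multiset Seg).sort (· ≤ ·)).Perm l :=
    Multiset.coe_eq_coe.mp (by rw [Multiset.sort_eq])
  have hl_sort : ∀ Δ ∈ (l : Multiset Seg).sort (· ≤ ·), segA Δ = a :=
    fun Δ hΔ => hstart Δ (hsort.mem_iff.mp hΔ)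
  have hadm' : rList ((l : Multiset Seg).sort (· ≤ ·)) (some h) ≠ none := hadm
  have h1 := perm_main hsort a h hl_sort hadm'
  have h2 := perm_main hperm a h hstart h1.2
  exact h2.1
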